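/- arXiv:1705.00599 — 3 statements merged into one kernel-verified Lean document; each statement's English description precedes it below -/
import Mathlib

section
/- For m > 0 and nonzero vectors η, ξ ∈ ℝⁿ with choices of signs ±₁, ±₂ ∈ {+1,−1}, the quantity |⟨ξ⟩_m − (±₁η)·(±₂ξ)/|η|| is bounded above by a constant times m + |ξ|·∠(±₁η, ±₂ξ), where ⟨ξ⟩_m = (m² + |ξ|²)^{1/2}. -/
open MeasureTheory Complex InnerProductGeometry
open scoped FourierTransform ENNReal RealInnerProductSpace

noncomputable section

abbrev ES (n : ℕ) := EuclideanSpace ℝ (Fin n)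

/-- spatial part of a spacetime frequency -/
def spart {n : ℕ} (z : ES (n+1)) : ES n := WithLp.toLp 2 (fun i : Fin n => z i.succ)

/-- inhomogeneous Sobolev norm via Fourier transform, ℝ≥0∞-valued -/
def sobolevNormE (n : ℕ) (s : ℝ) (f : ES n → ℂ) : ℝ≥0∞ :=
  (∫⁻ ξ : ES n, ENNReal.ofReal ((1 + ‖ξ‖^2) ^ s) * ((‖𝓕 f ξ‖₊ : ℝ≥0∞)) ^ 2) ^ (1/2 : ℝ)

/-- wave-Sobolev norm `H^{s,b}` on spacetime `ℝ^{1+n}` -/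
def waveNormE (n : ℕ) (s b : ℝ) (u : ES (n+1) → ℂ) : ℝ≥0∞ :=
  (∫⁻ z : ES (n+1), ENNReal.ofReal ((1 + ‖spart z‖^2) ^ s *
      (1 + (|z 0| - ‖spart z‖)^2) ^ b) * ((‖𝓕 u z‖₊ : ℝ≥0∞)) ^ 2) ^ (1/2 : ℝ)

/-- Fourier multiplier operator -/
def fmul {n : ℕ} (m : ES n → ℂ) (f : ES n → ℂ) : ES n → ℂ :=
  fun x => 𝓕⁻ (fun ξ => m ξ * 𝓕 f ξ) x

/-- partial derivative in the `k`-th coordinate direction -/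
def pdx {n : ℕ} {F : Type*} [NormedAddCommGroup F] [NormedSpace ℝ F]
    (k : Fin n) (f : ES n → F) (x : ES n) : F :=
  fderiv ℝ f x (EuclideanSpace.single k 1)

/-- japanese bracket of a real number -/
def jb (x : ℝ) : ℝ := Real.sqrt (1 + x^2)

/-- japanese bracket of a vector -/
def jbv {n : ℕ} (x : ES n) : ℝ := Real.sqrt (1 + ‖x‖^2)


/-- Symbol bound for the bilinear operator `𝒜_{(±₁,±₂)}` (Selberg–Tesfahun, Lemma 3.1):
`|⟨ξ⟩_m − (±₁η)·(±₂ξ)/|η|| ≲ m + |ξ| ∠(±₁η, ±₂ξ)`. -/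
theorem symbol_bound_A :
    ∃ C : ℝ, 0 < C ∧ ∀ (n : ℕ) (m : ℝ), 0 < m → ∀ (η ξ : ES n), η ≠ 0 → ξ ≠ 0 →
      ∀ ε₁ ε₂ : ℝ, (ε₁ = 1 ∨ ε₁ = -1) → (ε₂ = 1 ∨ ε₂ = -1) →
        |Real.sqrt (m^2 + ‖ξ‖^2) - ⟪ε₁ • η, ε₂ • ξ⟫ / ‖η‖| ≤
          C * (m + ‖ξ‖ * angle (ε₁ • η) (ε₂ • ξ)) := by
  use 2
  refine ⟨by norm_num, ?_⟩
  intro n m hm η ξ hη hξ ε₁ ε₂ hε₁ hε₂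
  set a := ε₁ • η with ha
  set b := ε₂ • ξ with hb
  set θ := angle a b with hθ
  have hna : ‖a‖ = ‖η‖ := by
    rcases hε₁ with h | h <;> simp [ha, h, norm_smul]
  have hnb : ‖b‖ = ‖ξ‖ := by
    rcases hε₂ with h | h <;> simp [hb, h, norm_smul]
  have hinner : ⟪a, b⟫ = Real.cos θ * (‖η‖ * ‖ξ‖) := by
    rw [← InnerProductGeometry.cos_angle_mul_norm_mul_norm, hna, hnb]
  have hηn : (0:ℝ) < ‖η‖ := norm_pos_iff.2 hη
  have hdiv : ⟪a, b⟫ / ‖η‖ = Real.cos θ * ‖ξ‖ := by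
    rw [hinner]; field_simp
  have hθ0 : 0 ≤ θ := InnerProductGeometry.angle_nonneg a b
  have hθπ : θ ≤ Real.pi := InnerProductGeometry.angle_le_pi a b
  have hcos1 : Real.cos θ ≤ 1 := Real.cos_le_one θ
  have hcosm1 : -1 ≤ Real.cos θ := Real.neg_one_le_cos θ
  have hkey : 1 - Real.cos θ ≤ 2 * θ := by
    have h1 : |Real.sin (θ/2)| = Real.sqrt ((1 - Real.cos θ)/2) := Real.abs_sin_half θ
    have h2 : (Real.sin (θ/2))^2 = (1 - Real.cos θ)/2 := by
      rw [← _root_.sq_abs, h1, Real.sq_sqrt (by linarith)]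
    have h3 : |Real.sin (θ/2)| ≤ |θ/2| := Real.abs_sin_le_abs
    have h4 : (Real.sin (θ/2))^2 ≤ (θ/2)^2 := by
      rw [← _root_.sq_abs, ← _root_.sq_abs (θ/2)]; exact pow_le_pow_left₀ (abs_nonneg _) h3 2
    nlinarith [Real.pi_le_four]
  have hξn : (0:ℝ) ≤ ‖ξ‖ := norm_nonneg ξ
  have hsqrt_le : Real.sqrt (m^2 + ‖ξ‖^2) ≤ m + ‖ξ‖ := by
    rw [show m^2 + ‖ξ‖^2 = (m+‖ξ‖)^2 - 2*m*‖ξ‖ by ring]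
    calc Real.sqrt ((m+‖ξ‖)^2 - 2*m*‖ξ‖) ≤ Real.sqrt ((m+‖ξ‖)^2) := by
          apply Real.sqrt_le_sqrt; nlinarith
      _ = m + ‖ξ‖ := Real.sqrt_sq (by linarith)
  have hsqrt_ge : ‖ξ‖ ≤ Real.sqrt (m^2 + ‖ξ‖^2) := by
    have h := Real.sqrt_le_sqrt (show ‖ξ‖^2 ≤ m^2 + ‖ξ‖^2 by nlinarith)
    rwa [Real.sqrt_sq hξn] at h
  rw [hdiv, abs_le]
  constructor <;> nlinarith [mul_nonneg hξn hθ0, mul_le_mul_of_nonneg_left hkey hξn]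
end
end

section
/- For m > 0 and nonzero η, ξ ∈ ℝⁿ and signs ±₁, ±₂, the symbol b_{±₁,±₂}(η,ξ) = ⟨η⟩_m(±₂ξ) − ⟨ξ⟩_m(±₁η) satisfies |b_{±₁,±₂}(η,ξ)| ≲ m(|η|+|ξ|) + |η||ξ|·∠(±₁η,±₂ξ). -/
open MeasureTheory Complex InnerProductGeometry
open scoped FourierTransform ENNReal RealInnerProductSpace

noncomputable section

lemma one_sub_cos_le_half_sq {θ : ℝ} (h0 : 0 ≤ θ) : 1 - Real.cos θ ≤ θ ^ 2 / 2 := by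
  have h1 : Real.cos θ = 2 * Real.cos (θ / 2) ^ 2 - 1 := by
    rw [← Real.cos_two_mul]; ring_nf
  have h2 : Real.sin (θ / 2) ^ 2 + Real.cos (θ / 2) ^ 2 = 1 := Real.sin_sq_add_cos_sq _
  have h3 : Real.sin (θ / 2) ≤ θ / 2 := Real.sin_le (by linarith)
  have h4 : |Real.sin (θ / 2)| ≤ |θ / 2| := Real.abs_sin_le_abs
  have h5 : Real.sin (θ / 2) ^ 2 ≤ (θ / 2) ^ 2 := by
    have e1 := _root_.sq_abs (Real.sin (θ / 2)); have e2 := _root_.sq_abs (θ / 2)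
    nlinarith [abs_nonneg (Real.sin (θ / 2)), abs_nonneg (θ / 2)]
  nlinarith

lemma sqrt_msq_le {m r : ℝ} (hm : 0 ≤ m) (hr : 0 ≤ r) :
    Real.sqrt (m ^ 2 + r ^ 2) ≤ m + r := by
  have h : Real.sqrt (m ^ 2 + r ^ 2) ≤ Real.sqrt ((m + r) ^ 2) :=
    Real.sqrt_le_sqrt (by nlinarith)
  rwa [Real.sqrt_sq (by linarith)] at h

lemma le_sqrt_msq {m r : ℝ} (hr : 0 ≤ r) : r ≤ Real.sqrt (m ^ 2 + r ^ 2) := by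
  have h : Real.sqrt (r ^ 2) ≤ Real.sqrt (m ^ 2 + r ^ 2) :=
    Real.sqrt_le_sqrt (by nlinarith [sq_nonneg m])
  rwa [Real.sqrt_sq hr] at h

lemma aux_bound {n : ℕ} (m : ℝ) (hm : 0 ≤ m) (a b : ES n) (ha : a ≠ 0) (hb : b ≠ 0) :
    ‖Real.sqrt (m ^ 2 + ‖a‖ ^ 2) • b - Real.sqrt (m ^ 2 + ‖b‖ ^ 2) • a‖ ≤
      m * (‖a‖ + ‖b‖) + ‖a‖ * ‖b‖ * angle a b := by
  set A := Real.sqrt (m ^ 2 + ‖a‖ ^ 2) with hA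
  set B := Real.sqrt (m ^ 2 + ‖b‖ ^ 2) with hB
  have hna : (0:ℝ) < ‖a‖ := norm_pos_iff.mpr ha
  have hnb : (0:ℝ) < ‖b‖ := norm_pos_iff.mpr hb
  have hA1 : A ≤ m + ‖a‖ := sqrt_msq_le hm hna.le
  have hA2 : ‖a‖ ≤ A := le_sqrt_msq hna.le
  have hB1 : B ≤ m + ‖b‖ := sqrt_msq_le hm hnb.le
  have hB2 : ‖b‖ ≤ B := le_sqrt_msq hnb.le
  have key : A • b - B • a = (A - ‖a‖) • b + (‖a‖ • b - ‖b‖ • a) + (‖b‖ - B) • a := by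
    module
  have hθ0 : 0 ≤ angle a b := angle_nonneg a b
  have hcos : ⟪a, b⟫ = ‖a‖ * ‖b‖ * Real.cos (angle a b) := by
    have h := (cos_angle a b).symm
    rw [div_eq_iff (by positivity : ‖a‖ * ‖b‖ ≠ 0)] at h
    rw [h]; ring
  have hcos' : ⟪b, a⟫ = ‖a‖ * ‖b‖ * Real.cos (angle a b) := by
    rw [real_inner_comm]; exact hcos
  have hM : ‖‖a‖ • b - ‖b‖ • a‖ ≤ ‖a‖ * ‖b‖ * angle a b := by
    have hsq : ‖‖a‖ • b - ‖b‖ • a‖ ^ 2 ≤ (‖a‖ * ‖b‖ * angle a b) ^ 2 := by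
      rw [@norm_sub_sq_real]
      rw [real_inner_smul_left, real_inner_smul_right, hcos']
      rw [norm_smul, norm_smul]
      simp only [Real.norm_eq_abs, _root_.abs_of_nonneg hna.le, _root_.abs_of_nonneg hnb.le]
      have h1 : 1 - Real.cos (angle a b) ≤ (angle a b) ^ 2 / 2 :=
        one_sub_cos_le_half_sq hθ0
      nlinarith [sq_nonneg (‖a‖ * ‖b‖), mul_pos hna hnb]
    have h2 := Real.sqrt_le_sqrt hsq
    rwa [Real.sqrt_sq (norm_nonneg _),
      Real.sqrt_sq (by positivity)] at h2
  calc ‖A • b - B • a‖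
      ≤ ‖(A - ‖a‖) • b‖ + ‖‖a‖ • b - ‖b‖ • a‖ + ‖(‖b‖ - B) • a‖ := by
        rw [key]; exact norm_add₃_le
    _ ≤ m * ‖b‖ + ‖a‖ * ‖b‖ * angle a b + m * ‖a‖ := by
        have g1 : ‖(A - ‖a‖) • b‖ ≤ m * ‖b‖ := by
          rw [norm_smul, Real.norm_eq_abs, _root_.abs_of_nonneg (by linarith)]
          have : A - ‖a‖ ≤ m := by linarith
          nlinarith
        have g3 : ‖(‖b‖ - B) • a‖ ≤ m * ‖a‖ := by
          rw [norm_smul, Real.norm_eq_abs, _root_.abs_of_nonpos (by linarith)]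
          have : B - ‖b‖ ≤ m := by linarith
          nlinarith
        exact add_le_add (add_le_add g1 hM) g3
    _ = m * (‖a‖ + ‖b‖) + ‖a‖ * ‖b‖ * angle a b := by ring

/-- Symbol bound for the null form `ℬ_{±₁,±₂}` (Selberg–Tesfahun, Lemma 3.2):
`|⟨η⟩_m(±₂ξ) − ⟨ξ⟩_m(±₁η)| ≲ m(|η|+|ξ|) + |η||ξ| ∠(±₁η,±₂ξ)`. -/
theorem symbol_bound_B :
    ∃ C : ℝ, 0 < C ∧ ∀ (n : ℕ) (m : ℝ), 0 < m → ∀ (η ξ : ES n), η ≠ 0 → ξ ≠ 0 →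
      ∀ ε₁ ε₂ : ℝ, (ε₁ = 1 ∨ ε₁ = -1) → (ε₂ = 1 ∨ ε₂ = -1) →
        ‖Real.sqrt (m^2 + ‖η‖^2) • (ε₂ • ξ) - Real.sqrt (m^2 + ‖ξ‖^2) • (ε₁ • η)‖ ≤
          C * (m * (‖η‖ + ‖ξ‖) + ‖η‖ * ‖ξ‖ * angle (ε₁ • η) (ε₂ • ξ)) := by
  refine ⟨1, one_pos, fun n m hm η ξ hη hξ ε₁ ε₂ hε₁ hε₂ => ?_⟩
  set a := ε₁ • η with hadef
  set b := ε₂ • ξ with hbdef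
  have hε₁' : |ε₁| = 1 := by rcases hε₁ with h | h <;> simp [h]
  have hε₂' : |ε₂| = 1 := by rcases hε₂ with h | h <;> simp [h]
  have hna : ‖a‖ = ‖η‖ := by rw [hadef, norm_smul, Real.norm_eq_abs, hε₁', one_mul]
  have hnb : ‖b‖ = ‖ξ‖ := by rw [hbdef, norm_smul, Real.norm_eq_abs, hε₂', one_mul]
  have ha : a ≠ 0 := by
    rw [hadef]; exact smul_ne_zero (by rcases hε₁ with h | h <;> simp [h]) hη
  have hb : b ≠ 0 := by
    rw [hbdef]; exact smul_ne_zero (by rcases hε₂ with h | h <;> simp [h]) hξ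
  have := aux_bound m hm.le a b ha hb
  rw [hna, hnb] at this
  linarith
end
end

section
/- Let 0 ≤ α ≤ 1/2 and suppose the signs ±₁ and ±₂ are different. For real λ, μ and nonzero η, ξ ∈ ℝⁿ with η + ξ ≠ 0, ∠(±₁η, ±₂ξ) ≲ |η+ξ|^{1/2}/(|η|^{1/2}|ξ|^{1/2}) · min(|η|,|ξ|)^α ⟨(λ+μ) ± |η+ξ|⟩^{1/2−α} + (⟨λ ±₁ |η|⟩^{1/2} + ⟨μ ±₂ |ξ|⟩^{1/2}) / min(|η|,|ξ|)^{1/2}. -/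
open MeasureTheory Complex InnerProductGeometry
open scoped FourierTransform ENNReal RealInnerProductSpace

noncomputable section

lemma jb_nonneg (x : ℝ) : 0 ≤ jb x := Real.sqrt_nonneg _

lemma one_le_jb (x : ℝ) : 1 ≤ jb x := by
  rw [jb]
  have := Real.sqrt_le_sqrt (show (1:ℝ) ≤ 1 + x^2 by nlinarith [sq_nonneg x])
  simpa using this

lemma abs_le_jb (x : ℝ) : |x| ≤ jb x := by
  rw [jb, ← Real.sqrt_sq_eq_abs]
  exact Real.sqrt_le_sqrt (by nlinarith)

/-- quantitative smallness of an angle from its cosine -/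
lemma angle_key (t : ℝ) (h0 : 0 ≤ t) (h1 : t ≤ Real.pi) :
    t ≤ Real.pi * Real.sqrt ((1 - Real.cos t) / 2) := by
  have hpi := Real.pi_pos
  have hs : 2 / Real.pi * (t / 2) ≤ Real.sin (t / 2) :=
    Real.mul_le_sin (by linarith) (by linarith)
  have hh : Real.sin (t / 2) = Real.sqrt ((1 - Real.cos t) / 2) :=
    Real.sin_half_eq_sqrt h0 (by linarith)
  have : t / Real.pi ≤ Real.sqrt ((1 - Real.cos t) / 2) := by
    rw [← hh]
    calc t / Real.pi = 2 / Real.pi * (t / 2) := by field_simp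
      _ ≤ _ := hs
  calc t = Real.pi * (t / Real.pi) := by field_simp
    _ ≤ Real.pi * Real.sqrt ((1 - Real.cos t) / 2) := by
        exact mul_le_mul_of_nonneg_left this (le_of_lt hpi)

set_option maxHeartbeats 2000000 in
/-- Angle estimate (Lemma 2.1, estimate (angle2)) in the case of different signs `±₁ ≠ ±₂`:
`∠(±₁η, ±₂ξ) ≲ |η+ξ|^{1/2}/(|η|^{1/2}|ξ|^{1/2}) · min(|η|,|ξ|)^α ⟨(λ+μ) ± |η+ξ|⟩^{1/2−α}
  + (⟨λ ±₁ |η|⟩^{1/2} + ⟨μ ±₂ |ξ|⟩^{1/2})/min(|η|,|ξ|)^{1/2}`. -/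
theorem angle_estimate_two :
    ∃ C : ℝ, 0 < C ∧ ∀ (n : ℕ) (α : ℝ), 0 ≤ α → α ≤ 1/2 →
      ∀ ε ε₁ ε₂ : ℝ, (ε = 1 ∨ ε = -1) → (ε₁ = 1 ∨ ε₁ = -1) → (ε₂ = 1 ∨ ε₂ = -1) →
      ε₁ ≠ ε₂ →
      ∀ (lam mu : ℝ) (η ξ : ES n), η ≠ 0 → ξ ≠ 0 → η + ξ ≠ 0 →
        angle (ε₁ • η) (ε₂ • ξ) ≤
          C * (‖η + ξ‖ ^ ((1:ℝ)/2) / (‖η‖ ^ ((1:ℝ)/2) * ‖ξ‖ ^ ((1:ℝ)/2)) *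
                 ((min ‖η‖ ‖ξ‖) ^ α * jb ((lam + mu) + ε * ‖η + ξ‖) ^ ((1:ℝ)/2 - α)) +
               (jb (lam + ε₁ * ‖η‖) ^ ((1:ℝ)/2) + jb (mu + ε₂ * ‖ξ‖) ^ ((1:ℝ)/2)) /
                 (min ‖η‖ ‖ξ‖) ^ ((1:ℝ)/2)) := by
  refine ⟨6, by norm_num, ?_⟩
  intro n α hα0 hα2 ε ε₁ ε₂ hε hε₁ hε₂ hne lam mu η ξ hη hξ hηξ
  have hA : (0:ℝ) < ‖η‖ := norm_pos_iff.mpr hη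
  have hB : (0:ℝ) < ‖ξ‖ := norm_pos_iff.mpr hξ
  have hN : (0:ℝ) < ‖η + ξ‖ := norm_pos_iff.mpr hηξ
  set A : ℝ := ‖η‖ with hAdef
  set B : ℝ := ‖ξ‖ with hBdef
  set N : ℝ := ‖η + ξ‖ with hNdef
  set m : ℝ := min A B with hmdef
  have hm : 0 < m := lt_min hA hB
  set a : ℝ := lam + ε₁ * A with hadef
  set b : ℝ := mu + ε₂ * B with hbdef
  set c : ℝ := lam + mu + ε * N with hcdef
  set D : ℝ := N - |A - B| with hDdef
  -- basic facts about D
  have habsAB : |A - B| ≤ N := by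
    have := abs_norm_sub_norm_le η (-ξ)
    simpa [sub_neg_eq_add] using this
  have hD0 : 0 ≤ D := by simp only [hDdef]; linarith
  have hDm : D ≤ 2 * m := by
    have htri : N ≤ A + B := norm_add_le η ξ
    rcases le_total A B with h | h
    · have : m = A := min_eq_left h
      rw [hDdef, _root_.abs_of_nonpos (by linarith)]; rw [this]; linarith
    · have : m = B := min_eq_right h
      rw [hDdef, _root_.abs_of_nonneg (by linarith)]; rw [this]; linarith
  -- D is controlled by the three modulations
  have hDjb : D ≤ jb a + jb b + jb c := by
    have hε₂' : ε₂ = -ε₁ := by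
      rcases hε₁ with h1 | h1 <;> rcases hε₂ with h2 | h2 <;>
        simp_all <;> norm_num at hne ⊢
    have hkey : D ≤ |c - a - b| := by
      have hval : c - a - b = ε * N - ε₁ * (A - B) := by
        rw [hadef, hbdef, hcdef, hε₂']; ring
      have h1 : |ε * N| - |ε₁ * (A - B)| ≤ |ε * N - ε₁ * (A - B)| :=
        abs_sub_abs_le_abs_sub _ _
      have he : |ε| = 1 := by rcases hε with h | h <;> simp [h]
      have he1 : |ε₁| = 1 := by rcases hε₁ with h | h <;> simp [h]
      rw [abs_mul, abs_mul, he, he1, one_mul, one_mul,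
        _root_.abs_of_nonneg (le_of_lt hN)] at h1
      rw [hval, hDdef]; exact h1
    calc D ≤ |c - a - b| := hkey
      _ ≤ |c| + |a| + |b| := by
          have := abs_sub (c - a) b
          have := abs_sub c a
          calc |c - a - b| ≤ |c - a| + |b| := abs_sub _ _
            _ ≤ |c| + |a| + |b| := by
                have := abs_sub c a; linarith
      _ ≤ jb a + jb b + jb c := by
          have := abs_le_jb a; have := abs_le_jb b; have := abs_le_jb c
          linarith
  -- the master angle inequality
  set φ : ℝ := angle (ε₁ • η) (ε₂ • ξ) with hφdef
  have hφeq : φ = angle η (-ξ) := by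
    rcases hε₁ with h1 | h1 <;> rcases hε₂ with h2 | h2
    · exact absurd (h1.trans h2.symm) hne
    · rw [hφdef, h1, h2]; norm_num
    · rw [hφdef, h1, h2, neg_one_smul, one_smul, ← angle_neg_neg (-η) ξ, neg_neg]
    · exact absurd (h1.trans h2.symm) hne
  have hmaster : φ ≤ Real.pi * Real.sqrt (N * D / (2 * (A * B))) := by
    have h0φ : 0 ≤ φ := by rw [hφeq]; exact angle_nonneg _ _
    have h1φ : φ ≤ Real.pi := by rw [hφeq]; exact angle_le_pi _ _
    have hcos : Real.cos φ = -(⟪η, ξ⟫ / (A * B)) := by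
      rw [hφeq, cos_angle, inner_neg_right, norm_neg, neg_div]
    have hip : ‖η + ξ‖ ^ 2 = ‖η‖ ^ 2 + 2 * ⟪η, ξ⟫ + ‖ξ‖ ^ 2 :=
      norm_add_sq_real η ξ
    have hcos2 : (1 - Real.cos φ) / 2 = (N ^ 2 - (A - B) ^ 2) / (4 * (A * B)) := by
      rw [hcos]
      have hip' : ⟪η, ξ⟫ = (N ^ 2 - A ^ 2 - B ^ 2) / 2 := by
        rw [hNdef, hAdef, hBdef]; rw [hip]; ring
      rw [hip']
      field_simp
      ring
    have hsqle : (N ^ 2 - (A - B) ^ 2) / (4 * (A * B)) ≤ N * D / (2 * (A * B)) := by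
      rw [div_le_div_iff₀ (by positivity) (by positivity)]
      have h1 : N ^ 2 - (A - B) ^ 2 ≤ 2 * N * D := by
        have h2 : (A - B) ^ 2 = |A - B| ^ 2 := (_root_.sq_abs _).symm
        have h3 : 0 ≤ |A - B| := abs_nonneg _
        nlinarith
      nlinarith [mul_pos hA hB]
    calc φ ≤ Real.pi * Real.sqrt ((1 - Real.cos φ) / 2) := angle_key φ h0φ h1φ
      _ ≤ Real.pi * Real.sqrt (N * D / (2 * (A * B))) := by
          refine mul_le_mul_of_nonneg_left ?_ Real.pi_pos.le
          exact Real.sqrt_le_sqrt (by rw [hcos2]; exact hsqle)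
  -- nonnegativity of the two right-hand terms
  have hT1 : 0 ≤ N ^ ((1:ℝ)/2) / (A ^ ((1:ℝ)/2) * B ^ ((1:ℝ)/2)) *
      (m ^ α * jb c ^ ((1:ℝ)/2 - α)) := by
    apply mul_nonneg
    · exact div_nonneg (Real.rpow_nonneg hN.le _)
        (mul_nonneg (Real.rpow_nonneg hA.le _) (Real.rpow_nonneg hB.le _))
    · exact mul_nonneg (Real.rpow_nonneg hm.le _) (Real.rpow_nonneg (jb_nonneg c) _)
  have hT2 : 0 ≤ (jb a ^ ((1:ℝ)/2) + jb b ^ ((1:ℝ)/2)) / m ^ ((1:ℝ)/2) := by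
    exact div_nonneg (add_nonneg (Real.rpow_nonneg (jb_nonneg a) _)
      (Real.rpow_nonneg (jb_nonneg b) _)) (Real.rpow_nonneg hm.le _)
  have hpis3 : Real.pi * Real.sqrt 3 ≤ 6 := by
    have h3 : Real.sqrt 3 ≤ 1.8 := by
      rw [show (1.8:ℝ) = Real.sqrt (1.8 ^ 2) from (Real.sqrt_sq (by norm_num)).symm]
      exact Real.sqrt_le_sqrt (by norm_num)
    have hpi : Real.pi ≤ 3.15 := by linarith [Real.pi_lt_d2]
    have h30 : 0 ≤ Real.sqrt 3 := Real.sqrt_nonneg _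
    calc Real.pi * Real.sqrt 3 ≤ 3.15 * 1.8 :=
          mul_le_mul hpi h3 h30 (by norm_num)
      _ ≤ 6 := by norm_num
  rcases le_total (max (jb a) (jb b)) (jb c) with hmax | hmax
  · -- case: jb c is the largest
    have hDc : D ≤ 3 * jb c := by
      have h1 : jb a ≤ jb c := le_trans (le_max_left _ _) hmax
      have h2 : jb b ≤ jb c := le_trans (le_max_right _ _) hmax
      linarith
    have hjbc : 0 < jb c := lt_of_lt_of_le one_pos (one_le_jb c)
    -- interpolation bound on √D
    have hDhalf : Real.sqrt D ≤ Real.sqrt 2 * Real.sqrt 3 *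
        (m ^ α * jb c ^ ((1:ℝ)/2 - α)) := by
      have e1 : Real.sqrt D = D ^ ((1:ℝ)/2) := Real.sqrt_eq_rpow D
      have e2 : D ^ ((1:ℝ)/2) = D ^ α * D ^ ((1:ℝ)/2 - α) := by
        rw [← Real.rpow_add' hD0 (by norm_num : α + ((1:ℝ)/2 - α) ≠ 0)]
        ring_nf
      have b1 : D ^ α ≤ Real.sqrt 2 * m ^ α := by
        calc D ^ α ≤ (2 * m) ^ α := Real.rpow_le_rpow hD0 hDm hα0
          _ = 2 ^ α * m ^ α := Real.mul_rpow (by norm_num) hm.le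
          _ ≤ 2 ^ ((1:ℝ)/2) * m ^ α := by
              have h2a : (2:ℝ) ^ α ≤ 2 ^ ((1:ℝ)/2) :=
                Real.rpow_le_rpow_of_exponent_le (by norm_num) hα2
              exact mul_le_mul_of_nonneg_right h2a (Real.rpow_nonneg hm.le _)
          _ = Real.sqrt 2 * m ^ α := by rw [← Real.sqrt_eq_rpow]
      have b2 : D ^ ((1:ℝ)/2 - α) ≤ Real.sqrt 3 * jb c ^ ((1:ℝ)/2 - α) := by
        calc D ^ ((1:ℝ)/2 - α) ≤ (3 * jb c) ^ ((1:ℝ)/2 - α) :=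
              Real.rpow_le_rpow hD0 hDc (by linarith)
          _ = 3 ^ ((1:ℝ)/2 - α) * jb c ^ ((1:ℝ)/2 - α) :=
              Real.mul_rpow (by norm_num) hjbc.le
          _ ≤ 3 ^ ((1:ℝ)/2) * jb c ^ ((1:ℝ)/2 - α) := by
              have h3a : (3:ℝ) ^ ((1:ℝ)/2 - α) ≤ 3 ^ ((1:ℝ)/2) :=
                Real.rpow_le_rpow_of_exponent_le (by norm_num) (by linarith)
              exact mul_le_mul_of_nonneg_right h3a (Real.rpow_nonneg (jb_nonneg c) _)
          _ = Real.sqrt 3 * jb c ^ ((1:ℝ)/2 - α) := by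
              rw [← Real.sqrt_eq_rpow]
      calc Real.sqrt D = D ^ α * D ^ ((1:ℝ)/2 - α) := by rw [e1, e2]
        _ ≤ (Real.sqrt 2 * m ^ α) * (Real.sqrt 3 * jb c ^ ((1:ℝ)/2 - α)) := by
            apply mul_le_mul b1 b2 (Real.rpow_nonneg hD0 _) (by positivity)
        _ = Real.sqrt 2 * Real.sqrt 3 * (m ^ α * jb c ^ ((1:ℝ)/2 - α)) := by ring
    -- split the square root
    have hsplit : Real.sqrt (N * D / (2 * (A * B))) =
        Real.sqrt N * Real.sqrt D / (Real.sqrt 2 * (Real.sqrt A * Real.sqrt B)) := by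
      rw [Real.sqrt_div' (N * D) (by positivity), Real.sqrt_mul hN.le,
        Real.sqrt_mul (by norm_num : (0:ℝ) ≤ 2), Real.sqrt_mul hA.le]
    have hrA : Real.sqrt A = A ^ ((1:ℝ)/2) := Real.sqrt_eq_rpow A
    have hrB : Real.sqrt B = B ^ ((1:ℝ)/2) := Real.sqrt_eq_rpow B
    have hrN : Real.sqrt N = N ^ ((1:ℝ)/2) := Real.sqrt_eq_rpow N
    have hvA : (0:ℝ) < A ^ ((1:ℝ)/2) := Real.rpow_pos_of_pos hA _
    have hvB : (0:ℝ) < B ^ ((1:ℝ)/2) := Real.rpow_pos_of_pos hB _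
    have hs2 : (0:ℝ) < Real.sqrt 2 := Real.sqrt_pos.mpr (by norm_num)
    have hfin : Real.pi * Real.sqrt (N * D / (2 * (A * B))) ≤
        6 * (N ^ ((1:ℝ)/2) / (A ^ ((1:ℝ)/2) * B ^ ((1:ℝ)/2)) *
          (m ^ α * jb c ^ ((1:ℝ)/2 - α))) := by
      rw [hsplit, hrA, hrB, hrN]
      set u := N ^ ((1:ℝ)/2)
      set v := A ^ ((1:ℝ)/2) * B ^ ((1:ℝ)/2)
      set w := m ^ α * jb c ^ ((1:ℝ)/2 - α)
      have hv : 0 < v := mul_pos hvA hvB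
      have hu : 0 ≤ u := Real.rpow_nonneg hN.le _
      have hw : 0 ≤ w := by positivity
      calc Real.pi * (u * Real.sqrt D / (Real.sqrt 2 * v))
          ≤ Real.pi * (u * (Real.sqrt 2 * Real.sqrt 3 * w) / (Real.sqrt 2 * v)) := by
            have hnum : u * Real.sqrt D ≤ u * (Real.sqrt 2 * Real.sqrt 3 * w) :=
              mul_le_mul_of_nonneg_left hDhalf hu
            exact mul_le_mul_of_nonneg_left
              ((div_le_div_iff_of_pos_right (mul_pos hs2 hv)).mpr hnum) Real.pi_pos.le
        _ = (Real.pi * Real.sqrt 3) * (u / v * w) := by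
            field_simp
        _ ≤ 6 * (u / v * w) := by
            apply mul_le_mul_of_nonneg_right hpis3 (by positivity)
    calc φ ≤ Real.pi * Real.sqrt (N * D / (2 * (A * B))) := hmaster
      _ ≤ 6 * (N ^ ((1:ℝ)/2) / (A ^ ((1:ℝ)/2) * B ^ ((1:ℝ)/2)) *
            (m ^ α * jb c ^ ((1:ℝ)/2 - α))) := hfin
      _ ≤ _ := by nlinarith [hT2]
  · -- case: jb a or jb b is the largest
    set K : ℝ := max (jb a) (jb b) with hKdef
    have hK0 : 0 < K := lt_of_lt_of_le one_pos (le_trans (one_le_jb a) (le_max_left _ _))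
    have hDK : D ≤ 3 * K := by
      have h1 : jb a ≤ K := le_max_left _ _
      have h2 : jb b ≤ K := le_max_right _ _
      linarith
    set M : ℝ := max A B with hMdef
    have hM : 0 < M := lt_of_lt_of_le hA (le_max_left _ _)
    have hNM : N ≤ 2 * M := by
      have htri : N ≤ A + B := norm_add_le η ξ
      have : A ≤ M := le_max_left _ _
      have : B ≤ M := le_max_right _ _
      linarith [le_max_left A B, le_max_right A B]
    have hABMm : A * B = M * m := by
      rcases le_total A B with h | h
      · rw [hMdef, hmdef, max_eq_right h, min_eq_left h]; ring
      · rw [hMdef, hmdef, max_eq_left h, min_eq_right h]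
    have hquot : N * D / (2 * (A * B)) ≤ 3 * K / m := by
      rw [hABMm, div_le_div_iff₀ (by positivity) hm]
      have h1 : N * D ≤ 2 * M * (3 * K) :=
        mul_le_mul hNM hDK hD0 (by positivity)
      nlinarith [mul_le_mul_of_nonneg_right h1 hm.le]
    have hsqrt : Real.sqrt (N * D / (2 * (A * B))) ≤
        Real.sqrt 3 * (Real.sqrt K / Real.sqrt m) := by
      calc Real.sqrt (N * D / (2 * (A * B))) ≤ Real.sqrt (3 * K / m) :=
            Real.sqrt_le_sqrt hquot
        _ = Real.sqrt 3 * (Real.sqrt K / Real.sqrt m) := by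
            rw [Real.sqrt_div' (3 * K) hm.le, Real.sqrt_mul (by norm_num : (0:ℝ) ≤ 3) K,
              mul_div_assoc]
    have hKsum : Real.sqrt K ≤ jb a ^ ((1:ℝ)/2) + jb b ^ ((1:ℝ)/2) := by
      have hra : Real.sqrt (jb a) = jb a ^ ((1:ℝ)/2) :=
        Real.sqrt_eq_rpow (jb a)
      have hrb : Real.sqrt (jb b) = jb b ^ ((1:ℝ)/2) :=
        Real.sqrt_eq_rpow (jb b)
      rcases le_total (jb a) (jb b) with h | h
      · rw [hKdef, max_eq_right h, ← hra, ← hrb]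
        have := Real.sqrt_nonneg (jb a); linarith
      · rw [hKdef, max_eq_left h, ← hra, ← hrb]
        have := Real.sqrt_nonneg (jb b); linarith
    have hrm : Real.sqrt m = m ^ ((1:ℝ)/2) := Real.sqrt_eq_rpow m
    have hsm : 0 < Real.sqrt m := Real.sqrt_pos.mpr hm
    have hfin : Real.pi * Real.sqrt (N * D / (2 * (A * B))) ≤
        6 * ((jb a ^ ((1:ℝ)/2) + jb b ^ ((1:ℝ)/2)) / m ^ ((1:ℝ)/2)) := by
      calc Real.pi * Real.sqrt (N * D / (2 * (A * B)))
          ≤ Real.pi * (Real.sqrt 3 * (Real.sqrt K / Real.sqrt m)) :=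
            mul_le_mul_of_nonneg_left hsqrt Real.pi_pos.le
        _ = (Real.pi * Real.sqrt 3) * (Real.sqrt K / Real.sqrt m) := by ring
        _ ≤ 6 * (Real.sqrt K / Real.sqrt m) := by
            apply mul_le_mul_of_nonneg_right hpis3 (by positivity)
        _ ≤ 6 * ((jb a ^ ((1:ℝ)/2) + jb b ^ ((1:ℝ)/2)) / m ^ ((1:ℝ)/2)) := by
            rw [← hrm]
            gcongr
    calc φ ≤ Real.pi * Real.sqrt (N * D / (2 * (A * B))) := hmaster
      _ ≤ 6 * ((jb a ^ ((1:ℝ)/2) + jb b ^ ((1:ℝ)/2)) / m ^ ((1:ℝ)/2)) := hfin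
      _ ≤ _ := by nlinarith [hT1]
end
end
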